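/- Let n ≥ 3, let f : [0,1] → [0,1] be a strictly increasing singular function with associated full-measure set S ⊆ (0,1) on which f has derivative zero, let p and F be as in the construction (F(x) = 1 − p(f(x_1),…,f(x_{n−1}))). Fix x_1,…,x_{n−2} ∈ S pairwise distinct and set T = {x_1,…,x_{n−2}}. Then the function g(t) = F(x_1,…,x_{n−2},t) on (0,1) is strictly decreasing and surjective onto (0,1), and g is differentiable with derivative zero at every point t ∈ S ∖ T. -/

import Mathlib

open MeasureTheory

/-- The value of the formula defining `p`, computed using a permutation `σ` of the
coordinates: `(∏_{i ≠ last} x (σ i)) / (1 - x (σ last) + ∏_{i ≠ last} x (σ i))`. -/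
noncomputable def pVal {k : ℕ} (σ : Equiv.Perm (Fin (k + 1))) (x : Fin (k + 1) → ℝ) : ℝ :=
  (∏ i ∈ Finset.univ.erase (Fin.last k), x (σ i)) /
    (1 - x (σ (Fin.last k)) + ∏ i ∈ Finset.univ.erase (Fin.last k), x (σ i))

/-- The function `p` itself, defined using the canonical sorting permutation of the
coordinates of `x`. -/
noncomputable def pFun {k : ℕ} (x : Fin (k + 1) → ℝ) : ℝ := pVal (Tuple.sort x) x

/-- The function `F(x) = 1 - p(f x₁, …, f x_{n-1})`. -/
noncomputable def Fconstr {k : ℕ} (f : ℝ → ℝ) (x : Fin (k + 1) → ℝ) : ℝ :=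
  1 - pFun (fun i => f (x i))

/-- The one-variable slice `g(t) = F(x₁, …, x_{n-2}, t)` of `F`, with `x₁, …, x_{n-2}` fixed. -/
noncomputable def gSlice {k : ℕ} (f : ℝ → ℝ) (xfix : Fin k → ℝ) (t : ℝ) : ℝ :=
  Fconstr f (Fin.snoc xfix t)

lemma pFun_eq_of_max {k : ℕ} (b : Fin (k+1) → ℝ) (m : ℝ) (hm0 : m ≠ 0)
    (hle : ∀ i, b i ≤ m) (hex : ∃ i, b i = m) :
    pFun b = ((∏ i, b i)/m) / (1 - m + (∏ i, b i)/m) := by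
  set σ := Tuple.sort b with hσ
  have hmax : b (σ (Fin.last k)) = m := by
    refine le_antisymm (hle _) ?_
    obtain ⟨i, hi⟩ := hex
    have h1 : b (σ (σ.symm i)) ≤ b (σ (Fin.last k)) :=
      Tuple.monotone_sort b (Fin.le_last (σ.symm i))
    simpa [hi] using h1
  have hprod : (∏ i ∈ Finset.univ.erase (Fin.last k), b (σ i)) = (∏ i, b i) / m := by
    have h1 := Finset.mul_prod_erase Finset.univ (fun i => b (σ i)) (Finset.mem_univ (Fin.last k))
    have h2 : ∏ i, b (σ i) = ∏ i, b i := Equiv.prod_comp σ b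
    rw [h2, hmax] at h1
    field_simp
    linarith [h1]
  rw [pFun, pVal, hprod, hmax]


set_option maxHeartbeats 1000000 in
/-- (with `n = k + 2`, so `n ≥ 3` iff `k ≥ 1`) Let `f` be a strictly increasing
singular function with associated full-measure set `S ⊆ (0,1)` on which `f` has derivative
zero, and let `F(x) = 1 - p(f x₁, …, f x_{n-1})`. Fix pairwise distinct `x₁, …, x_{n-2} ∈ S`
and let `T = {x₁, …, x_{n-2}}`. Then `g(t) = F(x₁, …, x_{n-2}, t)` is strictly decreasing and
surjective from `(0,1)` onto `(0,1)`, and `g` is differentiable with derivative zero at every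
point of `S \ T`. -/
theorem statement14 (k : ℕ) (hk : 1 ≤ k) (f : ℝ → ℝ) (S : Set ℝ)
    (hmono : StrictMonoOn f (Set.Icc 0 1))
    (hcont : ContinuousOn f (Set.Icc 0 1))
    (hmaps : Set.MapsTo f (Set.Icc 0 1) (Set.Icc 0 1))
    (hsurj : Set.SurjOn f (Set.Icc 0 1) (Set.Icc 0 1))
    (hS : S ⊆ Set.Ioo 0 1) (hSvol : volume S = 1)
    (hderiv : ∀ x ∈ S, HasDerivAt f 0 x)
    (xfix : Fin k → ℝ) (hxS : ∀ i, xfix i ∈ S) (hxinj : Function.Injective xfix) :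
    StrictAntiOn (gSlice f xfix) (Set.Ioo 0 1) ∧
    Set.MapsTo (gSlice f xfix) (Set.Ioo 0 1) (Set.Ioo 0 1) ∧
    Set.SurjOn (gSlice f xfix) (Set.Ioo 0 1) (Set.Ioo 0 1) ∧
    ∀ t ∈ S \ Set.range xfix, HasDerivAt (gSlice f xfix) 0 t := by
  have hsub : Set.Ioo (0:ℝ) 1 ⊆ Set.Icc 0 1 := Set.Ioo_subset_Icc_self
  have h01 : (0:ℝ) ∈ Set.Icc (0:ℝ) 1 := by norm_num
  have h11 : (1:ℝ) ∈ Set.Icc (0:ℝ) 1 := by norm_num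
  have hf0 : f 0 = 0 := by
    obtain ⟨x, hx, hfx⟩ := hsurj h01
    have h1 : f 0 ≤ f x := hmono.monotoneOn h01 hx hx.1
    have h2 : 0 ≤ f 0 := (hmaps h01).1
    rw [hfx] at h1
    linarith
  have hf1 : f 1 = 1 := by
    obtain ⟨x, hx, hfx⟩ := hsurj h11
    have h1 : f x ≤ f 1 := hmono.monotoneOn hx h11 hx.2
    have h2 : f 1 ≤ 1 := (hmaps h11).2
    rw [hfx] at h1
    linarith
  have hfIoo : ∀ {x : ℝ}, x ∈ Set.Ioo (0:ℝ) 1 → f x ∈ Set.Ioo (0:ℝ) 1 := by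
    intro x hx
    constructor
    · rw [← hf0]; exact hmono h01 (hsub hx) hx.1
    · rw [← hf1]; exact hmono (hsub hx) h11 hx.2
  haveI : NeZero k := ⟨by omega⟩
  set a : Fin k → ℝ := fun i => f (xfix i) with ha
  have haIoo : ∀ i, a i ∈ Set.Ioo (0:ℝ) 1 := fun i => hfIoo (hS (hxS i))
  set A : ℝ := ∏ i, a i with hA
  have hApos : 0 < A := Finset.prod_pos (fun i _ => (haIoo i).1)
  set M0 : ℝ := Finset.univ.sup' Finset.univ_nonempty a with hM0
  obtain ⟨j, -, hj⟩ := Finset.exists_mem_eq_sup' (Finset.univ_nonempty (α := Fin k)) a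
  have hM0Ioo : M0 ∈ Set.Ioo (0:ℝ) 1 := by rw [hM0, hj]; exact haIoo j
  have hale : ∀ i, a i ≤ M0 := fun i => Finset.le_sup' a (Finset.mem_univ i)
  set G : ℝ → ℝ := fun u => 1 - (A*u/(max M0 u))/(1-(max M0 u)+A*u/(max M0 u)) with hG
  -- gSlice = G ∘ f pointwise
  have hgG : ∀ t : ℝ, gSlice f xfix t = G (f t) := by
    intro t
    rw [gSlice, Fconstr]
    set b : Fin (k+1) → ℝ := fun i => f (Fin.snoc (α := fun _ => ℝ) xfix t i) with hb
    have hbc : ∀ i : Fin k, b i.castSucc = a i := fun i => by simp [hb, ha]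
    have hbl : b (Fin.last k) = f t := by simp [hb]
    have hprod : ∏ i, b i = A * f t := by
      rw [Fin.prod_univ_castSucc]
      simp only [hbc, hbl, hA]
    have hmpos : (0:ℝ) < max M0 (f t) := lt_of_lt_of_le hM0Ioo.1 (le_max_left _ _)
    have hle : ∀ i, b i ≤ max M0 (f t) := by
      intro i
      induction i using Fin.lastCases with
      | last => rw [hbl]; exact le_max_right _ _
      | cast i => rw [hbc]; exact le_trans (hale i) (le_max_left _ _)
    have hex : ∃ i, b i = max M0 (f t) := by
      rcases le_total (f t) M0 with h | h
      · exact ⟨j.castSucc, by rw [hbc, ← hj, ← hM0, max_eq_left h]⟩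
      · exact ⟨Fin.last k, by rw [hbl, max_eq_right h]⟩
    rw [pFun_eq_of_max b _ hmpos.ne' hle hex, hprod]
  -- basic facts about m = max M0 u for u ∈ (0,1)
  have hfacts : ∀ u : ℝ, 0 < u → u < 1 →
      0 < max M0 u ∧ max M0 u < 1 ∧ 0 < A*u/(max M0 u) ∧
      0 < 1 - max M0 u + A*u/(max M0 u) ∧
      G u = (1 - max M0 u)/(1 - max M0 u + A*u/(max M0 u)) := by
    intro u hu0 hu1
    have hm0 : 0 < max M0 u := lt_of_lt_of_le hM0Ioo.1 (le_max_left _ _)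
    have hm1 : max M0 u < 1 := max_lt hM0Ioo.2 hu1
    have hX : 0 < A*u/(max M0 u) := by positivity
    have hD : 0 < 1 - max M0 u + A*u/(max M0 u) := by linarith
    refine ⟨hm0, hm1, hX, hD, ?_⟩
    simp only [hG]
    rw [one_sub_div hD.ne']
    congr 1
    ring
  have hGIoo : ∀ u : ℝ, 0 < u → u < 1 → G u ∈ Set.Ioo (0:ℝ) 1 := by
    intro u hu0 hu1
    obtain ⟨hm0, hm1, hX, hD, hGu⟩ := hfacts u hu0 hu1
    rw [hGu]
    constructor
    · apply div_pos (by linarith) hD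
    · rw [div_lt_one hD]; linarith
  clear_value a A M0 G
  refine ⟨?_, ?_, ?_, ?_⟩
  · -- StrictAntiOn
    intro u hu v hv huv
    rw [hgG u, hgG v]
    have hfu := hfIoo hu
    have hfv := hfIoo hv
    have hfuv : f u < f v := hmono (hsub hu) (hsub hv) huv
    obtain ⟨hmu0, hmu1, hXu, hDu, hGu⟩ := hfacts (f u) hfu.1 hfu.2
    obtain ⟨hmv0, hmv1, hXv, hDv, hGv⟩ := hfacts (f v) hfv.1 hfv.2
    rw [hGu, hGv, div_lt_div_iff₀ hDv hDu]
    rcases le_or_gt (f v) M0 with hv' | hv'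
    · have hu' : f u ≤ M0 := le_trans hfuv.le hv'
      rw [max_eq_left hv', max_eq_left hu']
      have hM0p := hM0Ioo.1
      have h1 : A*(f u)/M0 < A*(f v)/M0 := by gcongr
      nlinarith [hM0Ioo.2, hM0Ioo.1]
    · rcases le_or_gt (f u) M0 with hu' | hu'
      · rw [max_eq_left hu', max_eq_right hv'.le]
        rw [mul_div_cancel_right₀ A (by linarith [hM0Ioo.1] : f v ≠ 0)]
        have h1 : A*(f u)/M0 ≤ A := by
          rw [div_le_iff₀ hM0Ioo.1]
          nlinarith
        nlinarith [hfv.2, hM0Ioo.2]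
      · rw [max_eq_right hu'.le, max_eq_right hv'.le]
        rw [mul_div_cancel_right₀ A (by linarith [hM0Ioo.1] : f v ≠ 0)]
        rw [mul_div_cancel_right₀ A (by linarith [hM0Ioo.1] : f u ≠ 0)]
        nlinarith [hfv.2]
  · -- MapsTo
    intro t ht
    rw [hgG t]
    have hft := hfIoo ht
    exact hGIoo (f t) hft.1 hft.2
  · -- SurjOn
    intro y hy
    have hy0 := hy.1
    have hy1 := hy.2
    have hc : 0 < 1 - M0 + A := by nlinarith [hM0Ioo.2]
    -- find u ∈ (0,1) with G u = y
    have hkey : ∃ u : ℝ, 0 < u ∧ u < 1 ∧ G u = y := by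
      rcases le_or_gt ((1-M0)/(1-M0+A)) y with hcase | hcase
      · set u : ℝ := M0*(1-M0)*(1-y)/(A*y) with hudef
        have hAy : 0 < A*y := by positivity
        have hnum : 0 < M0*(1-M0)*(1-y) :=
          mul_pos (mul_pos hM0Ioo.1 (by linarith [hM0Ioo.2])) (by linarith)
        have hu0 : 0 < u := div_pos hnum hAy
        have hle' : (1-M0)*(1-y) ≤ A*y := by
          rw [div_le_iff₀ hc] at hcase
          nlinarith
        have huM0 : u ≤ M0 := by
          rw [hudef, div_le_iff₀ hAy]
          nlinarith [hM0Ioo.1]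
        have hu1 : u < 1 := lt_of_le_of_lt huM0 hM0Ioo.2
        refine ⟨u, hu0, hu1, ?_⟩
        obtain ⟨hm0, hm1, hX, hD, hGu⟩ := hfacts u hu0 hu1
        have hm : max M0 u = M0 := max_eq_left huM0
        rw [hm] at hD
        rw [hGu, hm, div_eq_iff hD.ne', hudef]
        field_simp [hApos.ne', hy0.ne', hM0Ioo.1.ne']
        ring
      · set u : ℝ := 1 - A*y/(1-y) with hudef
        have h1y : 0 < 1 - y := by linarith
        have hAy' : 0 < A*y/(1-y) := div_pos (by positivity) h1y
        have hM0u : M0 < u := by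
          rw [lt_div_iff₀ hc] at hcase
          rw [hudef]
          have h2 : A*y/(1-y) < 1 - M0 := by
            rw [div_lt_iff₀ h1y]
            nlinarith
          linarith
        have hu0 : 0 < u := lt_trans hM0Ioo.1 hM0u
        have hu1 : u < 1 := by rw [hudef]; linarith
        refine ⟨u, hu0, hu1, ?_⟩
        obtain ⟨hm0, hm1, hX, hD, hGu⟩ := hfacts u hu0 hu1
        have hm : max M0 u = u := max_eq_right hM0u.le
        rw [hm] at hD
        have hAu : A * u / u = A := mul_div_cancel_right₀ A hu0.ne'
        rw [hAu] at hD
        rw [hGu, hm, hAu, div_eq_iff hD.ne', hudef]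
        field_simp [hApos.ne', hy0.ne']
        ring
    obtain ⟨u, hu0, hu1, hGu⟩ := hkey
    obtain ⟨t, ht, hft⟩ := hsurj (Set.mem_Icc.2 ⟨hu0.le, hu1.le⟩)
    refine ⟨t, ?_, by rw [hgG t, hft]; exact hGu⟩
    constructor
    · rcases eq_or_lt_of_le ht.1 with h | h
      · exfalso; rw [← h, hf0] at hft; linarith
      · exact h
    · rcases eq_or_lt_of_le ht.2 with h | h
      · exfalso; rw [h, hf1] at hft; linarith
      · exact h
  · -- derivative
    intro t ⟨htS, htT⟩
    have hft := hfIoo (hS htS)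
    have hdf := hderiv t htS
    have hcf : ContinuousAt f t := hdf.continuousAt
    have hne : f t ≠ M0 := by
      rw [hM0, hj, ha]
      intro h
      exact htT ⟨j, (hmono.injOn (hsub (hS (hxS j))) (hsub (hS htS)) h.symm)⟩
    rcases lt_or_gt_of_ne hne with hlt | hgt
    · -- f t < M0
      set G1 : ℝ → ℝ := fun u => 1 - (A*u/M0)/(1-M0+A*u/M0) with hG1
      have hD1 : 1-M0+A*(f t)/M0 ≠ 0 := by
        have h0 : 0 < A*(f t)/M0 := div_pos (mul_pos hApos hft.1) hM0Ioo.1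
        have := hM0Ioo.2
        intro h; nlinarith
      have h1 : HasDerivAt (fun u : ℝ => A*u/M0) (A/M0) (f t) := by
        simpa using ((hasDerivAt_id (f t)).const_mul A).div_const M0
      have h2 : HasDerivAt (fun u : ℝ => 1-M0+A*u/M0) (A/M0) (f t) := h1.const_add (1-M0)
      have h3 := (h1.div h2 hD1).const_sub 1
      have h5 := h3.comp t hdf
      rw [mul_zero] at h5
      refine h5.congr_of_eventuallyEq ?_
      have hev : ∀ᶠ s in nhds t, f s < M0 := hcf.eventually_lt_const hlt
      filter_upwards [hev] with s hs
      rw [hgG s]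
      simp only [hG, Function.comp_apply, max_eq_left hs.le]
      rfl
    · -- f t > M0
      set G2 : ℝ → ℝ := fun u => 1 - A/(1-u+A) with hG2
      have hD2 : 1-(f t)+A ≠ 0 := by nlinarith [hft.2]
      have h1 : HasDerivAt (fun u : ℝ => 1-u+A) (-1) (f t) := by
        simpa using ((hasDerivAt_id (f t)).const_sub 1).add_const A
      have h3 := ((hasDerivAt_const (f t) A).div h1 hD2).const_sub 1
      have h5 := h3.comp t hdf
      rw [mul_zero] at h5
      refine h5.congr_of_eventuallyEq ?_
      have hev : ∀ᶠ s in nhds t, M0 < f s := hcf.eventually_const_lt hgt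
      filter_upwards [hev] with s hs
      have hs0 : f s ≠ 0 := by linarith [hM0Ioo.1]
      rw [hgG s]
      simp only [hG, Function.comp_apply, max_eq_right hs.le]
      rw [mul_div_cancel_right₀ A hs0]
      rfl
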